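/- For every family ψ of subsets of {1,…,k} and every σ ⊆ {1,…,k}: (−1)^{|σ|} · ∑_{G ⊆ Min(ψ), ⋃G = σ} (−1)^{|G|} = ∑_{τ ⊆ σ, τ ∉ UP(ψ)} (−1)^{|τ|}. -/

import Mathlib

open Finset

lemma my_inner_sum {k : ℕ} (σ A : Finset (Fin k)) :
    ∑ τ ∈ σ.powerset.filter (fun τ => A ⊆ τ), (-1:ℤ)^τ.card
    = if A = σ then (-1:ℤ)^σ.card else 0 := by
  by_cases hA : A ⊆ σ
  · have key : ∑ τ ∈ σ.powerset.filter (fun τ => A ⊆ τ), (-1:ℤ)^τ.card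
        = ∑ s ∈ (σ \ A).powerset, (-1:ℤ)^A.card * (-1:ℤ)^s.card := by
      refine Finset.sum_nbij' (fun τ => τ \ A) (fun s => s ∪ A) ?_ ?_ ?_ ?_ ?_
      · intro τ hτ
        simp only [mem_filter, mem_powerset] at hτ ⊢
        exact sdiff_subset_sdiff hτ.1 Subset.rfl
      · intro s hs
        simp only [mem_powerset] at hs
        simp only [mem_filter, mem_powerset]
        exact ⟨union_subset (hs.trans sdiff_subset) hA, subset_union_right⟩
      · intro τ hτ
        simp only [mem_filter, mem_powerset] at hτ
        exact sdiff_union_of_subset hτ.2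
      · intro s hs
        simp only [mem_powerset] at hs
        have hd : Disjoint s A := sdiff_disjoint.mono_left hs
        exact union_sdiff_cancel_right hd
      · intro τ hτ
        simp only [mem_filter, mem_powerset] at hτ
        rw [← pow_add]
        congr 1
        rw [card_sdiff_of_subset hτ.2]
        have := card_le_card hτ.2
        omega
    rw [key, ← Finset.mul_sum, Finset.sum_powerset_neg_one_pow_card]
    by_cases h : A = σ
    · simp [h, sdiff_eq_empty_iff_subset.mpr (subset_of_eq h)]
    · have : σ \ A ≠ ∅ := fun he =>
        h (Subset.antisymm hA (sdiff_eq_empty_iff_subset.mp he))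
      simp [h, this]
  · have he : σ.powerset.filter (fun τ => A ⊆ τ) = ∅ := by
      rw [filter_eq_empty_iff]
      intro τ hτ hAτ
      exact hA (hAτ.trans (mem_powerset.mp hτ))
    have hne : A ≠ σ := fun h => hA (subset_of_eq h)
    simp [he, hne]

theorem stmt_1 (k : ℕ) (ψ : Finset (Finset (Fin k))) (σ : Finset (Fin k)) :
    (-1 : ℤ) ^ σ.card *
      ∑ G ∈ ((ψ.filter fun ρ => ∀ ρ' ∈ ψ, ρ' ⊆ ρ → ρ' = ρ).powerset.filter
        fun G => G.sup id = σ), (-1 : ℤ) ^ G.card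
    = ∑ τ ∈ σ.powerset.filter (fun τ => ¬ ∃ ρ ∈ ψ, ρ ⊆ τ), (-1 : ℤ) ^ τ.card := by
  set M := ψ.filter fun ρ => ∀ ρ' ∈ ψ, ρ' ⊆ ρ → ρ' = ρ with hM
  have exists_min : ∀ ρ ∈ ψ, ∃ m ∈ M, m ⊆ ρ := by
    intro ρ hρ
    obtain ⟨m, hm, hmin⟩ : ∃ m ∈ ψ.filter (· ⊆ ρ), ∀ x ∈ ψ.filter (· ⊆ ρ), ¬ x < m := by
      obtain ⟨m, hm, hmin⟩ := Finset.exists_minimal (s := ψ.filter (· ⊆ ρ)) ⟨ρ, by simp [hρ]⟩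
      exact ⟨m, hm, fun x hx hlt => lt_irrefl m (lt_of_le_of_lt (hmin hx hlt.le) hlt)⟩
    simp only [mem_filter] at hm
    refine ⟨m, ?_, hm.2⟩
    rw [hM, mem_filter]
    refine ⟨hm.1, fun ρ' hρ' hsub => ?_⟩
    by_contra hne
    exact hmin ρ' (mem_filter.mpr ⟨hρ', hsub.trans hm.2⟩) (lt_of_le_of_ne hsub hne)
  have hcond : ∀ τ : Finset (Fin k), (¬ ∃ ρ ∈ ψ, ρ ⊆ τ) ↔ M.filter (· ⊆ τ) = ∅ := by
    intro τ
    rw [filter_eq_empty_iff]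
    constructor
    · intro h m hm hsub
      exact h ⟨m, (mem_filter.mp hm).1, hsub⟩
    · rintro h ⟨ρ, hρ, hsub⟩
      obtain ⟨m, hm, hmρ⟩ := exists_min ρ hρ
      exact h hm (hmρ.trans hsub)
  have hpow : ∀ τ : Finset (Fin k),
      M.powerset.filter (fun G => G.sup id ⊆ τ) = (M.filter (· ⊆ τ)).powerset := by
    intro τ
    ext G
    simp only [mem_filter, mem_powerset]
    constructor
    · rintro ⟨h1, h2⟩ x hx
      exact mem_filter.mpr ⟨h1 hx, (Finset.le_sup (f := id) hx).trans h2⟩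
    · intro h
      exact ⟨fun {x} hx => (mem_filter.mp (h hx)).1,
        Finset.sup_le fun x hx => (mem_filter.mp (h hx)).2⟩
  calc (-1 : ℤ) ^ σ.card * ∑ G ∈ (M.powerset.filter fun G => G.sup id = σ), (-1 : ℤ) ^ G.card
      = ∑ G ∈ M.powerset, (if G.sup id = σ then (-1:ℤ)^σ.card else 0) * (-1:ℤ)^G.card := by
        rw [Finset.mul_sum, Finset.sum_filter]
        apply Finset.sum_congr rfl
        intro G _
        by_cases h : G.sup id = σ <;> simp [h]
    _ = ∑ G ∈ M.powerset, ∑ τ ∈ σ.powerset,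
          (if G.sup id ⊆ τ then (-1:ℤ)^τ.card * (-1:ℤ)^G.card else 0) := by
        apply Finset.sum_congr rfl
        intro G _
        rw [← my_inner_sum σ (G.sup id), Finset.sum_filter, Finset.sum_mul]
        apply Finset.sum_congr rfl
        intro τ _
        by_cases h : G.sup id ⊆ τ <;> simp [h]
    _ = ∑ τ ∈ σ.powerset, (∑ G ∈ M.powerset.filter (fun G => G.sup id ⊆ τ),
          (-1:ℤ)^G.card) * (-1:ℤ)^τ.card := by
        rw [Finset.sum_comm]
        apply Finset.sum_congr rfl
        intro τ _
        rw [Finset.sum_filter, Finset.sum_mul]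
        apply Finset.sum_congr rfl
        intro G _
        by_cases h : G.sup id ⊆ τ <;> simp [h, mul_comm]
    _ = ∑ τ ∈ σ.powerset, (if (¬ ∃ ρ ∈ ψ, ρ ⊆ τ) then 1 else 0) * (-1:ℤ)^τ.card := by
        apply Finset.sum_congr rfl
        intro τ _
        rw [hpow τ, Finset.sum_powerset_neg_one_pow_card]
        congr 1
        simp only [hcond τ]
    _ = ∑ τ ∈ σ.powerset.filter (fun τ => ¬ ∃ ρ ∈ ψ, ρ ⊆ τ), (-1 : ℤ) ^ τ.card := by
        rw [Finset.sum_filter]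
        apply Finset.sum_congr rfl
        intro τ _
        by_cases h : ∃ ρ ∈ ψ, ρ ⊆ τ <;> simp [h]
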